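/- (Zhang) Let G be a finite simple graph and g, f : V(G) → ℕ with g ≤ f pointwise. If G has a fractional (g,f)-factor, then G has a fractional (g,f)-factor whose indicator function h satisfies h(e) ∈ {0, 1/2, 1} for every edge e ∈ E(G). -/

import Mathlib

open Finset

/-- The degree of `v` in the induced subgraph `G − S` (on `V(G) \ S`), i.e. the number of
neighbors of `v` in `G` that lie outside `S`. -/
def dOut {V : Type*} [Fintype V] [DecidableEq V] (G : SimpleGraph V) [DecidableRel G.Adj]
    (S : Finset V) (v : V) : ℕ :=
  (G.neighborFinset v \ S).card

/-- `Tset G f S = {v ∈ V(G) − S : d_{G−S}(v) < f v}`. -/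
def Tset {V : Type*} [Fintype V] [DecidableEq V] (G : SimpleGraph V) [DecidableRel G.Adj]
    (f : V → ℕ) (S : Finset V) : Finset V :=
  Sᶜ.filter fun v => dOut G S v < f v

/-- `h` is (the indicator function of) a fractional `(g,f)`-factor of `G`:
`0 ≤ h(e) ≤ 1` on every edge and `g x ≤ Σ_{e ∋ x} h e ≤ f x` for every vertex `x`. -/
def IsFracFactor {V : Type*} [Fintype V] [DecidableEq V] (G : SimpleGraph V)
    [DecidableRel G.Adj] (g f : V → ℕ) (h : Sym2 V → ℝ) : Prop :=
  (∀ e ∈ G.edgeFinset, 0 ≤ h e ∧ h e ≤ 1) ∧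
  ∀ x : V, (g x : ℝ) ≤ ∑ e ∈ G.incidenceFinset x, h e ∧
    ∑ e ∈ G.incidenceFinset x, h e ≤ (f x : ℝ)

/-- `G` has all fractional `(g,f)`-factors: for every `q : V → ℕ` with `g ≤ q ≤ f`
pointwise, `G` has a fractional `q`-factor (a fractional `(q,q)`-factor). -/
def HasAllFracFactors {V : Type*} [Fintype V] [DecidableEq V] (G : SimpleGraph V)
    [DecidableRel G.Adj] (g f : V → ℕ) : Prop :=
  ∀ q : V → ℕ, (∀ v, g v ≤ q v) → (∀ v, q v ≤ f v) → ∃ h, IsFracFactor G q q h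


set_option linter.unusedSectionVars false
set_option linter.unusedVariables false
set_option maxHeartbeats 1000000

section ZhangAuxSection

namespace ZhangAux

attribute [local instance] Classical.propDecidable


def IsInt (x : ℝ) : Prop := ∃ k : ℤ, x = k

lemma isInt_intCast (k : ℤ) : IsInt (k : ℝ) := ⟨k, rfl⟩

lemma isInt_of_sub {a b : ℝ} (ha : IsInt a) (hab : IsInt (a - b)) : IsInt b := by
  obtain ⟨k, rfl⟩ := ha; obtain ⟨l, hl⟩ := hab
  exact ⟨k - l, by push_cast; linarith⟩

lemma isInt_sum {α : Type*} {s : Finset α} {m : α → ℝ} (h : ∀ i ∈ s, IsInt (m i)) :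
    IsInt (∑ i ∈ s, m i) := by
  classical
  induction s using Finset.induction_on with
  | empty => exact ⟨0, by simp⟩
  | insert _ _ hx ih =>
    rw [Finset.sum_insert hx]
    obtain ⟨k, hk⟩ := h _ (Finset.mem_insert_self _ _)
    obtain ⟨l, hl⟩ := ih fun i hi => h i (Finset.mem_insert_of_mem hi)
    exact ⟨k + l, by push_cast; rw [hk, hl]⟩

lemma lt_of_le_notInt {x : ℝ} {k : ℤ} (h : x ≤ k) (hx : ¬ IsInt x) : x < k :=
  lt_of_le_of_ne h (fun he => hx (he ▸ isInt_intCast k))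

lemma lt_of_ge_notInt {x : ℝ} {k : ℤ} (h : (k:ℝ) ≤ x) (hx : ¬ IsInt x) : (k:ℝ) < x :=
  lt_of_le_of_ne h (fun he => hx (he ▸ isInt_intCast k))

lemma step_up {a hi D t : ℝ} (hD : 0 < D) (ht : t ≤ (hi - a)/D) : a + t*D ≤ hi := by
  rw [le_div_iff₀ hD] at ht; linarith

lemma step_down {a lo D t : ℝ} (hD : D < 0) (ht : t ≤ (a - lo)/(-D)) : lo ≤ a + t*D := by
  rw [le_div_iff₀ (neg_pos.mpr hD)] at ht; linarith

lemma step_eq {a b D : ℝ} (hD : D ≠ 0) (t : ℝ) (ht : t = (b - a)/D) : a + t*D = b := by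
  rw [ht]; field_simp; ring

lemma neg_ratio (a g b : ℝ) : (a - g) / (-b) = (g - a) / b := by
  rw [div_neg, show g - a = -(a - g) by ring, neg_div]

variable {V : Type*} [Fintype V] [DecidableEq V]

def sigL (y : V × V → ℝ) (v : V) : ℝ := ∑ u, y (v, u)
def sigR (y : V × V → ℝ) (v : V) : ℝ := ∑ u, y (u, v)

def Feas (c : V × V → ℤ) (gL fL gR fR : V → ℤ) (y : V × V → ℝ) : Prop :=
  (∀ p, 0 ≤ y p ∧ y p ≤ (c p : ℝ)) ∧
  (∀ v, (gL v : ℝ) ≤ sigL y v ∧ sigL y v ≤ (fL v : ℝ)) ∧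
  (∀ v, (gR v : ℝ) ≤ sigR y v ∧ sigR y v ≤ (fR v : ℝ))

noncomputable def mu (y : V × V → ℝ) : ℕ :=
  (univ.filter fun p => ¬ IsInt (y p)).card +
  (univ.filter fun v => ¬ IsInt (sigL y v)).card +
  (univ.filter fun v => ¬ IsInt (sigR y v)).card

lemma sum_filter_fst (m : V × V → ℝ) (v : V) :
    ∑ p ∈ univ.filter (fun p => p.1 = v), m p = ∑ u, m (v, u) := by
  rw [show univ.filter (fun p : V × V => p.1 = v) = univ.image (fun u => (v, u)) by
    ext ⟨a, b⟩
    simp only [mem_filter, mem_univ, true_and, mem_image]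
    constructor
    · rintro rfl; exact ⟨b, rfl⟩
    · rintro ⟨u, hu⟩; cases hu; rfl]
  rw [Finset.sum_image (by intro a _ b _ h; simpa using h)]

lemma sum_filter_snd (m : V × V → ℝ) (v : V) :
    ∑ p ∈ univ.filter (fun p => p.2 = v), m p = ∑ u, m (u, v) := by
  rw [show univ.filter (fun p : V × V => p.2 = v) = univ.image (fun u => (u, v)) by
    ext ⟨a, b⟩
    simp only [mem_filter, mem_univ, true_and, mem_image]
    constructor
    · rintro rfl; exact ⟨a, rfl⟩
    · rintro ⟨u, hu⟩; cases hu; rfl]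
  rw [Finset.sum_image (by intro a _ b _ h; simpa using h)]

lemma sigL_add_mul (y dd : V × V → ℝ) (t : ℝ) (v : V) :
    sigL (fun p => y p + t * dd p) v = sigL y v + t * sigL dd v := by
  simp [sigL, Finset.sum_add_distrib, Finset.mul_sum]

lemma sigR_add_mul (y dd : V × V → ℝ) (t : ℝ) (v : V) :
    sigR (fun p => y p + t * dd p) v = sigR y v + t * sigR dd v := by
  simp [sigR, Finset.sum_add_distrib, Finset.mul_sum]

lemma perturb (c : V × V → ℤ) (gL fL gR fR : V → ℤ) (y dd : V × V → ℝ)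
    (hfeas : Feas c gL fL gR fR y) (hddne : dd ≠ 0)
    (hsupp : ∀ p, IsInt (y p) → dd p = 0)
    (hbL : ∀ v, IsInt (sigL y v) → sigL dd v = 0)
    (hbR : ∀ v, IsInt (sigR y v) → sigR dd v = 0) :
    ∃ y', Feas c gL fL gR fR y' ∧ mu y' < mu y := by
  obtain ⟨hcap, hSL, hSR⟩ := hfeas
  have hfrac : ∀ p, dd p ≠ 0 → ¬ IsInt (y p) := fun p hp hi => hp (hsupp p hi)
  have hfracL : ∀ v, sigL dd v ≠ 0 → ¬ IsInt (sigL y v) := fun v hv hi => hv (hbL v hi)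
  have hfracR : ∀ v, sigR dd v ≠ 0 → ¬ IsInt (sigR y v) := fun v hv hi => hv (hbR v hi)
  set R1 := (univ.filter fun p : V × V => 0 < dd p).image (fun p => ((c p : ℝ) - y p) / dd p)
    with hR1
  set R2 := (univ.filter fun p : V × V => dd p < 0).image (fun p => (y p - 0) / (- dd p))
    with hR2
  set R3 := (univ.filter fun v : V => 0 < sigL dd v).image
    (fun v => ((fL v : ℝ) - sigL y v) / sigL dd v) with hR3
  set R4 := (univ.filter fun v : V => sigL dd v < 0).image
    (fun v => (sigL y v - (gL v : ℝ)) / (- sigL dd v)) with hR4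
  set R5 := (univ.filter fun v : V => 0 < sigR dd v).image
    (fun v => ((fR v : ℝ) - sigR y v) / sigR dd v) with hR5
  set R6 := (univ.filter fun v : V => sigR dd v < 0).image
    (fun v => (sigR y v - (gR v : ℝ)) / (- sigR dd v)) with hR6
  set ratios := R1 ∪ R2 ∪ R3 ∪ R4 ∪ R5 ∪ R6 with hratios
  have hne' : ratios.Nonempty := by
    obtain ⟨p, hp⟩ : ∃ p, dd p ≠ 0 := by
      by_contra h; push_neg at h; exact hddne (funext h)
    rcases hp.lt_or_gt with h | h
    · exact ⟨(y p - 0) / (- dd p), by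
        rw [hratios]
        refine mem_union_left _ (mem_union_left _ (mem_union_left _ (mem_union_left _
          (mem_union_right _ ?_))))
        exact mem_image_of_mem _ (mem_filter.mpr ⟨mem_univ _, h⟩)⟩
    · exact ⟨((c p : ℝ) - y p) / dd p, by
        rw [hratios]
        refine mem_union_left _ (mem_union_left _ (mem_union_left _ (mem_union_left _
          (mem_union_left _ ?_))))
        exact mem_image_of_mem _ (mem_filter.mpr ⟨mem_univ _, h⟩)⟩
  set t := ratios.min' hne' with htdef
  have htmem : t ∈ ratios := ratios.min'_mem hne'
  have htle : ∀ x ∈ ratios, t ≤ x := fun x hx => ratios.min'_le x hx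
  have hpos : ∀ x ∈ ratios, 0 < x := by
    intro x hx
    rw [hratios] at hx
    simp only [mem_union] at hx
    rcases hx with ((((hx | hx) | hx) | hx) | hx) | hx
    · obtain ⟨p, hp, rfl⟩ := mem_image.mp hx
      have hd : 0 < dd p := (mem_filter.mp hp).2
      have hy : y p < (c p : ℝ) := lt_of_le_notInt (hcap p).2 (hfrac p hd.ne')
      exact div_pos (by linarith) hd
    · obtain ⟨p, hp, rfl⟩ := mem_image.mp hx
      have hd : dd p < 0 := (mem_filter.mp hp).2
      have hy : (0:ℝ) < y p := by
        have := lt_of_ge_notInt (k := 0) (by simpa using (hcap p).1) (hfrac p hd.ne)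
        simpa using this
      exact div_pos (by linarith) (by linarith)
    · obtain ⟨v, hv, rfl⟩ := mem_image.mp hx
      have hd : 0 < sigL dd v := (mem_filter.mp hv).2
      have hy : sigL y v < (fL v : ℝ) := lt_of_le_notInt (hSL v).2 (hfracL v hd.ne')
      exact div_pos (by linarith) hd
    · obtain ⟨v, hv, rfl⟩ := mem_image.mp hx
      have hd : sigL dd v < 0 := (mem_filter.mp hv).2
      have hy : (gL v : ℝ) < sigL y v := lt_of_ge_notInt (hSL v).1 (hfracL v hd.ne)
      exact div_pos (by linarith) (by linarith)
    · obtain ⟨v, hv, rfl⟩ := mem_image.mp hx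
      have hd : 0 < sigR dd v := (mem_filter.mp hv).2
      have hy : sigR y v < (fR v : ℝ) := lt_of_le_notInt (hSR v).2 (hfracR v hd.ne')
      exact div_pos (by linarith) hd
    · obtain ⟨v, hv, rfl⟩ := mem_image.mp hx
      have hd : sigR dd v < 0 := (mem_filter.mp hv).2
      have hy : (gR v : ℝ) < sigR y v := lt_of_ge_notInt (hSR v).1 (hfracR v hd.ne)
      exact div_pos (by linarith) (by linarith)
  have htpos : 0 < t := hpos t htmem
  refine ⟨fun p => y p + t * dd p, ⟨?_, ?_, ?_⟩, ?_⟩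
  · -- capacity constraints
    intro p
    show 0 ≤ y p + t * dd p ∧ y p + t * dd p ≤ (c p : ℝ)
    rcases lt_trichotomy (dd p) 0 with hd | hd | hd
    · constructor
      · have ht2 : t ≤ (y p - 0) / (- dd p) := htle _ (by
          rw [hratios]
          refine mem_union_left _ (mem_union_left _ (mem_union_left _ (mem_union_left _
            (mem_union_right _ ?_))))
          exact mem_image_of_mem _ (mem_filter.mpr ⟨mem_univ _, hd⟩))
        have := step_down hd ht2
        linarith
      · have : t * dd p ≤ 0 := mul_nonpos_of_nonneg_of_nonpos htpos.le hd.le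
        linarith [(hcap p).2]
    · simp only [hd, mul_zero, add_zero]; exact hcap p
    · constructor
      · have : 0 ≤ t * dd p := mul_nonneg htpos.le hd.le
        linarith [(hcap p).1]
      · have ht2 : t ≤ ((c p : ℝ) - y p) / dd p := htle _ (by
          rw [hratios]
          refine mem_union_left _ (mem_union_left _ (mem_union_left _ (mem_union_left _
            (mem_union_left _ ?_))))
          exact mem_image_of_mem _ (mem_filter.mpr ⟨mem_univ _, hd⟩))
        exact step_up hd ht2
  · -- left sums
    intro v
    rw [sigL_add_mul]
    rcases lt_trichotomy (sigL dd v) 0 with hd | hd | hd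
    · constructor
      · have ht2 : t ≤ (sigL y v - (gL v : ℝ)) / (- sigL dd v) := htle _ (by
          rw [hratios]
          refine mem_union_left _ (mem_union_left _ (mem_union_right _ ?_))
          exact mem_image_of_mem _ (mem_filter.mpr ⟨mem_univ _, hd⟩))
        exact step_down hd ht2
      · have : t * sigL dd v ≤ 0 := mul_nonpos_of_nonneg_of_nonpos htpos.le hd.le
        linarith [(hSL v).2]
    · simp only [hd, mul_zero, add_zero]; exact hSL v
    · constructor
      · have : 0 ≤ t * sigL dd v := mul_nonneg htpos.le hd.le
        linarith [(hSL v).1]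
      · have ht2 : t ≤ ((fL v : ℝ) - sigL y v) / sigL dd v := htle _ (by
          rw [hratios]
          refine mem_union_left _ (mem_union_left _ (mem_union_left _ (mem_union_right _ ?_)))
          exact mem_image_of_mem _ (mem_filter.mpr ⟨mem_univ _, hd⟩))
        exact step_up hd ht2
  · -- right sums
    intro v
    rw [sigR_add_mul]
    rcases lt_trichotomy (sigR dd v) 0 with hd | hd | hd
    · constructor
      · have ht2 : t ≤ (sigR y v - (gR v : ℝ)) / (- sigR dd v) := htle _ (by
          rw [hratios]
          exact mem_union_right _ (mem_image_of_mem _ (mem_filter.mpr ⟨mem_univ _, hd⟩)))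
        exact step_down hd ht2
      · have : t * sigR dd v ≤ 0 := mul_nonpos_of_nonneg_of_nonpos htpos.le hd.le
        linarith [(hSR v).2]
    · simp only [hd, mul_zero, add_zero]; exact hSR v
    · constructor
      · have : 0 ≤ t * sigR dd v := mul_nonneg htpos.le hd.le
        linarith [(hSR v).1]
      · have ht2 : t ≤ ((fR v : ℝ) - sigR y v) / sigR dd v := htle _ (by
          rw [hratios]
          refine mem_union_left _ (mem_union_right _ ?_)
          exact mem_image_of_mem _ (mem_filter.mpr ⟨mem_univ _, hd⟩))
        exact step_up hd ht2
  · -- mu decreases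
    have hsubE : (univ.filter fun p => ¬ IsInt (y p + t * dd p)) ⊆
        (univ.filter fun p => ¬ IsInt (y p)) := by
      intro p hp
      simp only [mem_filter, mem_univ, true_and] at hp ⊢
      intro hi
      exact hp (by rw [hsupp p hi, mul_zero, add_zero]; exact hi)
    have hsubL : (univ.filter fun v => ¬ IsInt (sigL (fun p => y p + t * dd p) v)) ⊆
        (univ.filter fun v => ¬ IsInt (sigL y v)) := by
      intro v hv
      simp only [mem_filter, mem_univ, true_and] at hv ⊢
      intro hi
      exact hv (by rw [sigL_add_mul, hbL v hi, mul_zero, add_zero]; exact hi)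
    have hsubR : (univ.filter fun v => ¬ IsInt (sigR (fun p => y p + t * dd p) v)) ⊆
        (univ.filter fun v => ¬ IsInt (sigR y v)) := by
      intro v hv
      simp only [mem_filter, mem_univ, true_and] at hv ⊢
      intro hi
      exact hv (by rw [sigR_add_mul, hbR v hi, mul_zero, add_zero]; exact hi)
    have hE := Finset.card_le_card hsubE
    have hLc := Finset.card_le_card hsubL
    have hRc := Finset.card_le_card hsubR
    -- strict decrease in one of the three
    have hstrict :
        (univ.filter fun p => ¬ IsInt (y p + t * dd p)).card <
          (univ.filter fun p => ¬ IsInt (y p)).card ∨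
        (univ.filter fun v => ¬ IsInt (sigL (fun p => y p + t * dd p) v)).card <
          (univ.filter fun v => ¬ IsInt (sigL y v)).card ∨
        (univ.filter fun v => ¬ IsInt (sigR (fun p => y p + t * dd p) v)).card <
          (univ.filter fun v => ¬ IsInt (sigR y v)).card := by
      rw [hratios] at htmem
      simp only [mem_union] at htmem
      rcases htmem with ((((hx | hx) | hx) | hx) | hx) | hx
      · left
        obtain ⟨p, hp, hpt⟩ := mem_image.mp hx
        have hd : 0 < dd p := (mem_filter.mp hp).2
        have hval : y p + t * dd p = (c p : ℝ) := step_eq hd.ne' t hpt.symm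
        refine Finset.card_lt_card (Finset.ssubset_iff_of_subset hsubE |>.mpr
          ⟨p, ?_, ?_⟩)
        · simp only [mem_filter, mem_univ, true_and]; exact hfrac p hd.ne'
        · simp only [mem_filter, mem_univ, true_and, not_not]
          rw [hval]; exact isInt_intCast _
      · left
        obtain ⟨p, hp, hpt⟩ := mem_image.mp hx
        have hd : dd p < 0 := (mem_filter.mp hp).2
        have hval : y p + t * dd p = 0 := by
          have h0 : dd p ≠ 0 := hd.ne
          have : t = (0 - y p) / dd p := by
            rw [← hpt]; exact neg_ratio _ _ _
          exact step_eq h0 t this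
        refine Finset.card_lt_card (Finset.ssubset_iff_of_subset hsubE |>.mpr
          ⟨p, ?_, ?_⟩)
        · simp only [mem_filter, mem_univ, true_and]; exact hfrac p hd.ne
        · simp only [mem_filter, mem_univ, true_and, not_not]
          rw [hval]; exact ⟨0, by norm_num⟩
      · right; left
        obtain ⟨v, hv, hvt⟩ := mem_image.mp hx
        have hd : 0 < sigL dd v := (mem_filter.mp hv).2
        have hval : sigL y v + t * sigL dd v = (fL v : ℝ) := step_eq hd.ne' t hvt.symm
        refine Finset.card_lt_card (Finset.ssubset_iff_of_subset hsubL |>.mpr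
          ⟨v, ?_, ?_⟩)
        · simp only [mem_filter, mem_univ, true_and]; exact hfracL v hd.ne'
        · simp only [mem_filter, mem_univ, true_and, not_not]
          rw [sigL_add_mul, hval]; exact isInt_intCast _
      · right; left
        obtain ⟨v, hv, hvt⟩ := mem_image.mp hx
        have hd : sigL dd v < 0 := (mem_filter.mp hv).2
        have hval : sigL y v + t * sigL dd v = (gL v : ℝ) := by
          have : t = ((gL v : ℝ) - sigL y v) / sigL dd v := by
            rw [← hvt]; exact neg_ratio _ _ _
          exact step_eq hd.ne t this
        refine Finset.card_lt_card (Finset.ssubset_iff_of_subset hsubL |>.mpr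
          ⟨v, ?_, ?_⟩)
        · simp only [mem_filter, mem_univ, true_and]; exact hfracL v hd.ne
        · simp only [mem_filter, mem_univ, true_and, not_not]
          rw [sigL_add_mul, hval]; exact isInt_intCast _
      · right; right
        obtain ⟨v, hv, hvt⟩ := mem_image.mp hx
        have hd : 0 < sigR dd v := (mem_filter.mp hv).2
        have hval : sigR y v + t * sigR dd v = (fR v : ℝ) := step_eq hd.ne' t hvt.symm
        refine Finset.card_lt_card (Finset.ssubset_iff_of_subset hsubR |>.mpr
          ⟨v, ?_, ?_⟩)
        · simp only [mem_filter, mem_univ, true_and]; exact hfracR v hd.ne'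
        · simp only [mem_filter, mem_univ, true_and, not_not]
          rw [sigR_add_mul, hval]; exact isInt_intCast _
      · right; right
        obtain ⟨v, hv, hvt⟩ := mem_image.mp hx
        have hd : sigR dd v < 0 := (mem_filter.mp hv).2
        have hval : sigR y v + t * sigR dd v = (gR v : ℝ) := by
          have : t = ((gR v : ℝ) - sigR y v) / sigR dd v := by
            rw [← hvt]; exact neg_ratio _ _ _
          exact step_eq hd.ne t this
        refine Finset.card_lt_card (Finset.ssubset_iff_of_subset hsubR |>.mpr
          ⟨v, ?_, ?_⟩)
        · simp only [mem_filter, mem_univ, true_and]; exact hfracR v hd.ne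
        · simp only [mem_filter, mem_univ, true_and, not_not]
          rw [sigR_add_mul, hval]; exact isInt_intCast _
    simp only [mu]
    omega


lemma exists_ker_vec {T F : Type*} [Fintype T] [Fintype F] [DecidableEq F]
    (hcard : Fintype.card T < Fintype.card F) (A : Matrix T F ℝ) :
    ∃ d : F → ℝ, d ≠ 0 ∧ A.mulVec d = 0 := by
  have hker : LinearMap.ker A.mulVecLin ≠ ⊥ := by
    intro hbot
    have h1 := LinearMap.finrank_range_add_finrank_ker A.mulVecLin
    rw [hbot, finrank_bot, add_zero] at h1
    have h2 : Module.finrank ℝ (LinearMap.range A.mulVecLin) ≤ Module.finrank ℝ (T → ℝ) :=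
      Submodule.finrank_le _
    rw [h1] at h2
    simp [Module.finrank_pi] at h2
    omega
  obtain ⟨d, hd, hd0⟩ := Submodule.exists_mem_ne_zero_of_ne_bot hker
  exact ⟨d, hd0, hd⟩

lemma kernel_dd (F : Finset (V × V)) (SL SR : Finset V)
    (hcard : SL.card + SR.card < F.card) :
    ∃ dd : V × V → ℝ, dd ≠ 0 ∧ (∀ p, dd p ≠ 0 → p ∈ F) ∧
      (∀ v ∈ SL, sigL dd v = 0) ∧ (∀ v ∈ SR, sigR dd v = 0) := by
  set A : Matrix (↥SL ⊕ ↥SR) (↥F) ℝ := fun w i =>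
    Sum.rec (fun v => if (i : V × V).1 = (v : V) then 1 else 0)
            (fun v => if (i : V × V).2 = (v : V) then 1 else 0) w with hA
  have hc : Fintype.card (↥SL ⊕ ↥SR) < Fintype.card ↥F := by
    simpa [Fintype.card_sum, Fintype.card_coe] using hcard
  obtain ⟨d, hdne, hd0⟩ := exists_ker_vec hc A
  set dd : V × V → ℝ := fun p => if h : p ∈ F then d ⟨p, h⟩ else 0 with hdd
  have hddval : ∀ i : ↥F, dd i = d i := by
    intro i; simp only [hdd]; rw [dif_pos i.2]
  have hsupp : ∀ p, dd p ≠ 0 → p ∈ F := by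
    intro p hp
    by_contra h
    exact hp (by simp only [hdd]; rw [dif_neg h])
  have key : ∀ (w : ↥SL ⊕ ↥SR), ∑ i : ↥F, A w i * d i = 0 := by
    intro w
    have := congrFun hd0 w
    simpa [Matrix.mulVec, dotProduct] using this
  refine ⟨dd, ?_, hsupp, ?_, ?_⟩
  · intro h
    obtain ⟨i, hi⟩ : ∃ i : ↥F, d i ≠ 0 := by
      by_contra hno; push_neg at hno
      exact hdne (funext hno)
    exact hi (by rw [← hddval i, h]; rfl)
  · intro v hv
    have hk := key (Sum.inl ⟨v, hv⟩)
    have : sigL dd v = ∑ i : ↥F, A (Sum.inl ⟨v, hv⟩) i * d i := by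
      rw [sigL.eq_def, ← sum_filter_fst dd v]
      rw [Finset.sum_filter]
      rw [← Finset.sum_subset (Finset.subset_univ F) (by
        intro p _ hp
        have : dd p = 0 := by
          by_contra h; exact hp (hsupp p h)
        simp [this])]
      rw [← Finset.sum_attach F (fun p => if p.1 = v then dd p else 0)]
      rw [← Finset.univ_eq_attach]
      refine Finset.sum_congr rfl ?_
      intro i _
      simp only [hA, hddval i]
      by_cases h : (i : V × V).1 = v <;> simp [h]
    rw [this, hk]
  · intro v hv
    have hk := key (Sum.inr ⟨v, hv⟩)
    have : sigR dd v = ∑ i : ↥F, A (Sum.inr ⟨v, hv⟩) i * d i := by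
      rw [sigR.eq_def, ← sum_filter_snd dd v]
      rw [Finset.sum_filter]
      rw [← Finset.sum_subset (Finset.subset_univ F) (by
        intro p _ hp
        have : dd p = 0 := by
          by_contra h; exact hp (hsupp p h)
        simp [this])]
      rw [← Finset.sum_attach F (fun p => if p.2 = v then dd p else 0)]
      rw [← Finset.univ_eq_attach]
      refine Finset.sum_congr rfl ?_
      intro i _
      simp only [hA, hddval i]
      by_cases h : (i : V × V).2 = v <;> simp [h]
    rw [this, hk]


/-- If a row-sum is an integer, then no row has exactly one fractional entry. -/
lemma row_second (y : V × V → ℝ) (v : V) (hint : IsInt (sigL y v)) (b : V)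
    (hfr : ¬ IsInt (y (v, b))) : ∃ b', b' ≠ b ∧ ¬ IsInt (y (v, b')) := by
  by_contra h; push_neg at h
  apply hfr
  apply isInt_of_sub hint
  have he : sigL y v - y (v, b) = ∑ u ∈ univ.erase b, y (v, u) := by
    rw [sigL.eq_def, ← Finset.add_sum_erase univ (fun u => y (v, u)) (mem_univ b)]
    ring
  rw [he]
  exact isInt_sum (fun u hu => h u (Finset.ne_of_mem_erase hu))

lemma col_second (y : V × V → ℝ) (v : V) (hint : IsInt (sigR y v)) (b : V)
    (hfr : ¬ IsInt (y (b, v))) : ∃ b', b' ≠ b ∧ ¬ IsInt (y (b', v)) := by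
  by_contra h; push_neg at h
  apply hfr
  apply isInt_of_sub hint
  have he : sigR y v - y (b, v) = ∑ u ∈ univ.erase b, y (u, v) := by
    rw [sigR.eq_def, ← Finset.add_sum_erase univ (fun u => y (u, v)) (mem_univ b)]
    ring
  rw [he]
  exact isInt_sum (fun u hu => h u (Finset.ne_of_mem_erase hu))

lemma improve (c : V × V → ℤ) (gL fL gR fR : V → ℤ) (y : V × V → ℝ)
    (hfeas : Feas c gL fL gR fR y) (p₀ : V × V) (hp₀ : ¬ IsInt (y p₀)) :
    ∃ y', Feas c gL fL gR fR y' ∧ mu y' < mu y := by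
  set F := univ.filter (fun p : V × V => ¬ IsInt (y p)) with hF
  have hmemF : ∀ p, p ∈ F ↔ ¬ IsInt (y p) := by
    intro p; simp [hF]
  have hp₀F : p₀ ∈ F := (hmemF p₀).mpr hp₀
  set row := fun v => F.filter (fun p => p.1 = v) with hrow
  set col := fun v => F.filter (fun p => p.2 = v) with hcol
  have hmemrow : ∀ v p, p ∈ row v ↔ (¬ IsInt (y p) ∧ p.1 = v) := by
    intro v p; simp [hrow, hF, and_assoc]
  have hmemcol : ∀ v p, p ∈ col v ↔ (¬ IsInt (y p) ∧ p.2 = v) := by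
    intro v p; simp [hcol, hF, and_assoc]
  set TL := univ.filter (fun v => IsInt (sigL y v) ∧ (row v).Nonempty) with hTL
  set TR := univ.filter (fun v => IsInt (sigR y v) ∧ (col v).Nonempty) with hTR
  have hmemTL : ∀ v, v ∈ TL ↔ (IsInt (sigL y v) ∧ (row v).Nonempty) := by
    intro v; simp [hTL]
  have hmemTR : ∀ v, v ∈ TR ↔ (IsInt (sigR y v) ∧ (col v).Nonempty) := by
    intro v; simp [hTR]
  -- every TL-row has ≥ 2 elements
  have hTL2 : ∀ v ∈ TL, 2 ≤ (row v).card := by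
    intro v hv
    obtain ⟨hint, p, hp⟩ := (hmemTL v).mp hv
    obtain ⟨hpfr, hp1⟩ := (hmemrow v p).mp hp
    have hfr' : ¬ IsInt (y (v, p.2)) := by
      rw [show (v, p.2) = p by rw [← hp1]]
      exact hpfr
    obtain ⟨b', hb'ne, hb'fr⟩ := row_second y v hint p.2 hfr'
    refine Finset.one_lt_card.mpr ⟨(v, p.2), ?_, (v, b'), ?_, ?_⟩
    · exact (hmemrow v _).mpr ⟨hfr', rfl⟩
    · exact (hmemrow v _).mpr ⟨hb'fr, rfl⟩
    · simp [hb'ne.symm]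
  have hTR2 : ∀ v ∈ TR, 2 ≤ (col v).card := by
    intro v hv
    obtain ⟨hint, p, hp⟩ := (hmemTR v).mp hv
    obtain ⟨hpfr, hp2⟩ := (hmemcol v p).mp hp
    have hfr' : ¬ IsInt (y (p.1, v)) := by
      rw [show (p.1, v) = p by rw [← hp2]]
      exact hpfr
    obtain ⟨b', hb'ne, hb'fr⟩ := col_second y v hint p.1 hfr'
    refine Finset.one_lt_card.mpr ⟨(p.1, v), ?_, (b', v), ?_, ?_⟩
    · exact (hmemcol v _).mpr ⟨hfr', rfl⟩
    · exact (hmemcol v _).mpr ⟨hb'fr, rfl⟩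
    · simp [hb'ne.symm]
  -- fiberwise counting
  have hFrow : F.card = ∑ v, (row v).card :=
    Finset.card_eq_sum_card_fiberwise (fun p _ => mem_univ p.1)
  have hFcol : F.card = ∑ v, (col v).card :=
    Finset.card_eq_sum_card_fiberwise (fun p _ => mem_univ p.2)
  have hTLbound : 2 * TL.card ≤ F.card := by
    calc 2 * TL.card = TL.card • 2 := by rw [smul_eq_mul]; ring
    _ ≤ ∑ v ∈ TL, (row v).card := Finset.card_nsmul_le_sum TL _ 2 hTL2
    _ ≤ ∑ v, (row v).card := Finset.sum_le_sum_of_subset (subset_univ TL)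
    _ = F.card := hFrow.symm
  have hTRbound : 2 * TR.card ≤ F.card := by
    calc 2 * TR.card = TR.card • 2 := by rw [smul_eq_mul]; ring
    _ ≤ ∑ v ∈ TR, (col v).card := Finset.card_nsmul_le_sum TR _ 2 hTR2
    _ ≤ ∑ v, (col v).card := Finset.sum_le_sum_of_subset (subset_univ TR)
    _ = F.card := hFcol.symm
  -- support facts needed for balance conditions off the kernel ports
  have hrow_empty : ∀ (dd : V × V → ℝ), (∀ p, dd p ≠ 0 → p ∈ F) → ∀ v,
      ¬ (row v).Nonempty → sigL dd v = 0 := by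
    intro dd hsupp v hne
    rw [sigL.eq_def]
    apply Finset.sum_eq_zero
    intro u _
    by_contra h
    exact hne ⟨(v, u), (hmemrow v _).mpr ⟨((hmemF _).mp (hsupp _ h)), rfl⟩⟩
  have hcol_empty : ∀ (dd : V × V → ℝ), (∀ p, dd p ≠ 0 → p ∈ F) → ∀ v,
      ¬ (col v).Nonempty → sigR dd v = 0 := by
    intro dd hsupp v hne
    rw [sigR.eq_def]
    apply Finset.sum_eq_zero
    intro u _
    by_contra h
    exact hne ⟨(u, v), (hmemcol v _).mpr ⟨((hmemF _).mp (hsupp _ h)), rfl⟩⟩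
  -- shared: given dd balanced on TL' ⊆ TL (missing at most w₀ recovered) and TR, conclude
  by_cases hesc : ∀ p ∈ F, IsInt (sigL y p.1) ∧ IsInt (sigR y p.2)
  · -- Case B : no escape
    have hmapTL : ∀ p ∈ F, p.1 ∈ TL := by
      intro p hp
      exact (hmemTL _).mpr ⟨(hesc p hp).1, ⟨p, (hmemrow _ p).mpr ⟨(hmemF p).mp hp, rfl⟩⟩⟩
    have hmapTR : ∀ p ∈ F, p.2 ∈ TR := by
      intro p hp
      exact (hmemTR _).mpr ⟨(hesc p hp).2, ⟨p, (hmemcol _ p).mpr ⟨(hmemF p).mp hp, rfl⟩⟩⟩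
    set w₀ := p₀.1 with hw₀
    have hw₀TL : w₀ ∈ TL := hmapTL p₀ hp₀F
    have hcard : (TL.erase w₀).card + TR.card < F.card := by
      have h1 : (TL.erase w₀).card = TL.card - 1 := Finset.card_erase_of_mem hw₀TL
      have h2 : 1 ≤ TL.card := Finset.card_pos.mpr ⟨w₀, hw₀TL⟩
      omega
    obtain ⟨dd, hddne, hsupp, hbSL, hbSR⟩ := kernel_dd F (TL.erase w₀) TR hcard
    have hrowsum : ∀ v, sigL dd v = ∑ p ∈ row v, dd p := by
      intro v
      rw [sigL.eq_def, ← sum_filter_fst dd v]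
      refine (Finset.sum_subset ?_ ?_).symm
      · intro p hp
        simp only [mem_filter, mem_univ, true_and]
        exact ((hmemrow v p).mp hp).2
      · intro p hp hnp
        by_contra h
        simp only [mem_filter, mem_univ, true_and] at hp
        exact hnp ((hmemrow v p).mpr ⟨(hmemF p).mp (hsupp p h), hp⟩)
    have hcolsum : ∀ v, sigR dd v = ∑ p ∈ col v, dd p := by
      intro v
      rw [sigR.eq_def, ← sum_filter_snd dd v]
      refine (Finset.sum_subset ?_ ?_).symm
      · intro p hp
        simp only [mem_filter, mem_univ, true_and]
        exact ((hmemcol v p).mp hp).2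
      · intro p hp hnp
        by_contra h
        simp only [mem_filter, mem_univ, true_and] at hp
        exact hnp ((hmemcol v p).mpr ⟨(hmemF p).mp (hsupp p h), hp⟩)
    have hbw₀ : sigL dd w₀ = 0 := by
      have hTLsum : ∑ v ∈ TL, sigL dd v = ∑ p ∈ F, dd p := by
        rw [Finset.sum_congr rfl (fun v _ => hrowsum v)]
        exact Finset.sum_fiberwise_of_maps_to hmapTL _
      have hTRsum : ∑ v ∈ TR, sigR dd v = ∑ p ∈ F, dd p := by
        rw [Finset.sum_congr rfl (fun v _ => hcolsum v)]
        exact Finset.sum_fiberwise_of_maps_to hmapTR _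
      have hTR0 : ∑ v ∈ TR, sigR dd v = 0 := Finset.sum_eq_zero hbSR
      have h0 : ∑ v ∈ TL.erase w₀, sigL dd v = 0 := Finset.sum_eq_zero hbSL
      have hsplit : sigL dd w₀ + ∑ v ∈ TL.erase w₀, sigL dd v = ∑ v ∈ TL, sigL dd v :=
        Finset.add_sum_erase TL _ hw₀TL
      rw [h0, add_zero] at hsplit
      rw [hsplit, hTLsum, ← hTRsum, hTR0]
    apply perturb c gL fL gR fR y dd hfeas hddne
    · intro p hi
      by_contra h
      exact (hmemF p).mp (hsupp p h) hi
    · intro v hi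
      by_cases hne : (row v).Nonempty
      · have hvTL : v ∈ TL := (hmemTL v).mpr ⟨hi, hne⟩
        by_cases hvw : v = w₀
        · rw [hvw]; exact hbw₀
        · exact hbSL v (Finset.mem_erase.mpr ⟨hvw, hvTL⟩)
      · exact hrow_empty dd hsupp v hne
    · intro v hi
      by_cases hne : (col v).Nonempty
      · exact hbSR v ((hmemTR v).mpr ⟨hi, hne⟩)
      · exact hcol_empty dd hsupp v hne
  · -- Case A : escape exists
    push_neg at hesc
    obtain ⟨p₁, hp₁F, hp₁⟩ := hesc
    have hcard : TL.card + TR.card < F.card := by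
      by_cases hL : IsInt (sigL y p₁.1)
      · -- escape on the right side
        have hR : ¬ IsInt (sigR y p₁.2) := hp₁ hL
        set u₀ := p₁.2 with hu₀
        have hu₀TR : u₀ ∉ TR := fun h => hR ((hmemTR u₀).mp h).1
        have hcolu₀ : 1 ≤ (col u₀).card :=
          Finset.card_pos.mpr ⟨p₁, (hmemcol _ _).mpr ⟨(hmemF p₁).mp hp₁F, rfl⟩⟩
        have hsum : (col u₀).card + ∑ v ∈ TR, (col v).card ≤ F.card := by
          calc (col u₀).card + ∑ v ∈ TR, (col v).card
              = ∑ v ∈ insert u₀ TR, (col v).card := (Finset.sum_insert (f := fun v => (col v).card) hu₀TR).symm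
          _ ≤ ∑ v : V, (col v).card := Finset.sum_le_sum_of_subset (subset_univ _)
          _ = F.card := hFcol.symm
        have h2 : 2 * TR.card ≤ ∑ v ∈ TR, (col v).card := by
          calc 2 * TR.card = TR.card • 2 := by rw [smul_eq_mul]; ring
          _ ≤ ∑ v ∈ TR, (col v).card := Finset.card_nsmul_le_sum TR _ 2 hTR2
        omega
      · set u₀ := p₁.1 with hu₀
        have hu₀TL : u₀ ∉ TL := fun h => hL ((hmemTL u₀).mp h).1
        have hrowu₀ : 1 ≤ (row u₀).card :=
          Finset.card_pos.mpr ⟨p₁, (hmemrow _ _).mpr ⟨(hmemF p₁).mp hp₁F, rfl⟩⟩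
        have hsum : (row u₀).card + ∑ v ∈ TL, (row v).card ≤ F.card := by
          calc (row u₀).card + ∑ v ∈ TL, (row v).card
              = ∑ v ∈ insert u₀ TL, (row v).card := (Finset.sum_insert (f := fun v => (row v).card) hu₀TL).symm
          _ ≤ ∑ v : V, (row v).card := Finset.sum_le_sum_of_subset (subset_univ _)
          _ = F.card := hFrow.symm
        have h2 : 2 * TL.card ≤ ∑ v ∈ TL, (row v).card := by
          calc 2 * TL.card = TL.card • 2 := by rw [smul_eq_mul]; ring
          _ ≤ ∑ v ∈ TL, (row v).card := Finset.card_nsmul_le_sum TL _ 2 hTL2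
        omega
    obtain ⟨dd, hddne, hsupp, hbSL, hbSR⟩ := kernel_dd F TL TR hcard
    apply perturb c gL fL gR fR y dd hfeas hddne
    · intro p hi
      by_contra h
      exact (hmemF p).mp (hsupp p h) hi
    · intro v hi
      by_cases hne : (row v).Nonempty
      · exact hbSL v ((hmemTL v).mpr ⟨hi, hne⟩)
      · exact hrow_empty dd hsupp v hne
    · intro v hi
      by_cases hne : (col v).Nonempty
      · exact hbSR v ((hmemTR v).mpr ⟨hi, hne⟩)
      · exact hcol_empty dd hsupp v hne


lemma round (c : V × V → ℤ) (gL fL gR fR : V → ℤ) (y : V × V → ℝ)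
    (hfeas : Feas c gL fL gR fR y) :
    ∃ z : V × V → ℝ, (∀ p, IsInt (z p)) ∧ Feas c gL fL gR fR z := by
  obtain ⟨n, hn⟩ : ∃ n, mu y ≤ n := ⟨mu y, le_refl _⟩
  induction n generalizing y with
  | zero =>
    by_cases h : ∀ p, IsInt (y p)
    · exact ⟨y, h, hfeas⟩
    · push_neg at h
      obtain ⟨p₀, hp₀⟩ := h
      obtain ⟨y', _, hlt⟩ := improve c gL fL gR fR y hfeas p₀ hp₀
      omega
  | succ n ih =>
    by_cases h : ∀ p, IsInt (y p)
    · exact ⟨y, h, hfeas⟩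
    · push_neg at h
      obtain ⟨p₀, hp₀⟩ := h
      obtain ⟨y', hfeas', hlt⟩ := improve c gL fL gR fR y hfeas p₀ hp₀
      exact ih y' hfeas' (by omega)


end ZhangAux

end ZhangAuxSection

open ZhangAux

lemma incidence_sum {V : Type*} [Fintype V] [DecidableEq V] (G : SimpleGraph V)
    [DecidableRel G.Adj] (m : Sym2 V → ℝ) (v : V) :
    ∑ e ∈ G.incidenceFinset v, m e = ∑ u ∈ G.neighborFinset v, m s(v, u) := by
  have himg : G.incidenceFinset v = (G.neighborFinset v).image (fun u => s(v, u)) := by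
    ext e
    induction e with
    | _ a b =>
      simp only [SimpleGraph.mem_incidenceFinset, mem_image, SimpleGraph.mem_neighborFinset]
      constructor
      · intro hab
        have hv : v ∈ s(a, b) := hab.2
        have hadj : G.Adj a b := hab.1
        rcases Sym2.mem_iff.mp hv with rfl | rfl
        · exact ⟨b, hadj, rfl⟩
        · exact ⟨a, hadj.symm, Sym2.eq_swap⟩
      · rintro ⟨u, hu, heq⟩
        rw [← heq]
        exact (SimpleGraph.mem_incidenceSet G v u).mpr hu
  rw [himg, Finset.sum_image]
  intro a _ b _ hab
  exact (Sym2.congr_right).mp hab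


/-- **Theorem 4 (Zhang).** If `G` has a fractional `(g,f)`-factor, then it has one whose
indicator function takes only the values `0`, `1/2`, `1` on the edges of `G`. -/
theorem zhang_half_integral_fractional_factor {V : Type*} [Fintype V] [DecidableEq V]
    (G : SimpleGraph V) [DecidableRel G.Adj] (g f : V → ℕ) (hgf : ∀ v, g v ≤ f v)
    (hex : ∃ h : Sym2 V → ℝ, IsFracFactor G g f h) :
    ∃ h : Sym2 V → ℝ, IsFracFactor G g f h ∧
      ∀ e ∈ G.edgeFinset, h e = 0 ∨ h e = 1 / 2 ∨ h e = 1 := by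
  classical
  obtain ⟨h, hcap, hsum⟩ := hex
  set c : V × V → ℤ := fun p => if G.Adj p.1 p.2 then 1 else 0 with hc
  set y : V × V → ℝ := fun p => if G.Adj p.1 p.2 then h s(p.1, p.2) else 0 with hy
  set gI : V → ℤ := fun v => (g v : ℤ) with hgI
  set fI : V → ℤ := fun v => (f v : ℤ) with hfI
  -- the two directional sums both equal the incidence sum
  have hsigL : ∀ (m : V × V → ℝ) v, sigL m v = ∑ u, m (v, u) := fun _ _ => rfl
  have hyL : ∀ v, sigL y v = ∑ e ∈ G.incidenceFinset v, h e := by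
    intro v
    rw [incidence_sum, sigL.eq_def]
    rw [← Finset.sum_filter, SimpleGraph.neighborFinset_eq_filter]
  have hyR : ∀ v, sigR y v = ∑ e ∈ G.incidenceFinset v, h e := by
    intro v
    rw [← hyL v, sigL.eq_def, sigR.eq_def]
    refine Finset.sum_congr rfl ?_
    intro u _
    simp only [hy]
    by_cases hadj : G.Adj v u
    · rw [if_pos hadj, if_pos hadj.symm, Sym2.eq_swap]
    · rw [if_neg hadj, if_neg (fun hh => hadj hh.symm)]
  have hfeas : Feas c gI fI gI fI y := by
    refine ⟨?_, ?_, ?_⟩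
    · intro p
      simp only [hy, hc]
      by_cases hadj : G.Adj p.1 p.2
      · rw [if_pos hadj, if_pos hadj]
        have := hcap s(p.1, p.2) (SimpleGraph.mem_edgeFinset.mpr hadj)
        simpa using this
      · rw [if_neg hadj, if_neg hadj]; norm_num
    · intro v
      rw [hyL v]
      have := hsum v
      constructor
      · exact_mod_cast this.1
      · exact_mod_cast this.2
    · intro v
      rw [hyR v]
      have := hsum v
      constructor
      · exact_mod_cast this.1
      · exact_mod_cast this.2
  obtain ⟨z, hzint, hzcap, hzL, hzR⟩ := round c gI fI gI fI y hfeas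
  -- z takes values 0/1 on edges, 0 elsewhere
  have hz01 : ∀ p : V × V, G.Adj p.1 p.2 → (z p = 0 ∨ z p = 1) := by
    intro p hadj
    obtain ⟨k, hk⟩ := hzint p
    have h0 := (hzcap p).1
    have h1 := (hzcap p).2
    rw [hk] at h0 h1 ⊢
    simp only [hc, if_pos hadj] at h1
    have hk0 : (0:ℤ) ≤ k := by exact_mod_cast h0
    have hk1 : k ≤ 1 := by exact_mod_cast h1
    interval_cases k
    · left; norm_num
    · right; norm_num
  have hz0 : ∀ p : V × V, ¬ G.Adj p.1 p.2 → z p = 0 := by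
    intro p hadj
    have h0 := (hzcap p).1
    have h1 := (hzcap p).2
    simp only [hc, if_neg hadj] at h1
    have : ((0:ℤ):ℝ) = 0 := by norm_num
    linarith [h1, h0, this ▸ h1]
  set h' : Sym2 V → ℝ := Sym2.lift ⟨fun a b => (z (a, b) + z (b, a)) / 2, by
    intro a b; ring⟩ with hh'
  have hh'val : ∀ a b, h' s(a, b) = (z (a, b) + z (b, a)) / 2 := by
    intro a b; simp [hh']
  have hvals : ∀ e ∈ G.edgeFinset, h' e = 0 ∨ h' e = 1 / 2 ∨ h' e = 1 := by
    intro e he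
    induction e with
    | _ a b =>
      have hadj : G.Adj a b := SimpleGraph.mem_edgeFinset.mp he
      rw [hh'val]
      rcases hz01 (a, b) hadj with h1 | h1 <;>
        rcases hz01 (b, a) hadj.symm with h2 | h2 <;>
        rw [h1, h2] <;> norm_num
  refine ⟨h', ⟨?_, ?_⟩, hvals⟩
  · intro e he
    rcases hvals e he with hv | hv | hv <;> rw [hv] <;> norm_num
  · intro v
    have hinc : ∑ e ∈ G.incidenceFinset v, h' e = (sigL z v + sigR z v) / 2 := by
      rw [incidence_sum]
      have hL : sigL z v = ∑ u ∈ G.neighborFinset v, z (v, u) := by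
        rw [sigL.eq_def]
        refine (Finset.sum_subset (subset_univ _) ?_).symm
        intro u _ hu
        exact hz0 (v, u) (by simpa [SimpleGraph.mem_neighborFinset] using hu)
      have hR : sigR z v = ∑ u ∈ G.neighborFinset v, z (u, v) := by
        rw [sigR.eq_def]
        refine (Finset.sum_subset (subset_univ _) ?_).symm
        intro u _ hu
        exact hz0 (u, v) (by
          intro hadj
          exact hu (by simpa [SimpleGraph.mem_neighborFinset] using hadj.symm))
      rw [hL, hR, ← Finset.sum_add_distrib, Finset.sum_div]
      refine Finset.sum_congr rfl ?_
      intro u _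
      rw [hh'val]
    rw [hinc]
    have h1 := hzL v
    have h2 := hzR v
    simp only [hgI, hfI] at h1 h2
    constructor
    · have : ((g v : ℤ) : ℝ) = (g v : ℝ) := by push_cast; ring
      rw [this] at h1 h2
      linarith [h1.1, h2.1]
    · have : ((f v : ℤ) : ℝ) = (f v : ℝ) := by push_cast; ring
      rw [this] at h1 h2
      linarith [h1.2, h2.2]
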